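/- Suppose p Must r and p ⟹^{s̄} q, where s̄ is the pointwise complement of s ∈ Act*. Then r ⇓U s (r is client-usable along the unsuccessful trace s). -/

import Mathlib

namespace MTP

/-- Processes of infinitary CCS with success.
`pre none p` is `τ.p`, `pre (some a) p` is `a.p`.
`sum f` is a countable sum `Σ_{i∈I} p_i` where `I = {n | f n ≠ none}`. -/
inductive Proc (Act : Type) (Const : Type) : Type where
  | one : Proc Act Const
  | const : Const → Proc Act Const
  | pre : Option Act → Proc Act Const → Proc Act Const
  | sum : (ℕ → Option (Proc Act Const)) → Proc Act Const

namespace Proc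
/-- The empty sum `0`. -/
def nil {Act Const : Type} : Proc Act Const := .sum fun _ => none
/-- Binary external sum `p + q`. -/
def ext {Act Const : Type} (p q : Proc Act Const) : Proc Act Const :=
  .sum fun n => if n = 0 then some p else if n = 1 then some q else none
end Proc

/-- Labels: visible actions, τ, and the success action ✓. -/
inductive Label (Act : Type) : Type where
  | act : Act → Label Act
  | tau : Label Act
  | ok : Label Act

/-- A CCS signature: an involutive complementation on actions, together with
a definition for every constant. -/
structure CCS (Act : Type) (Const : Type) : Type where
  co : Act → Act
  co_invol : ∀ a, co (co a) = a
  defn : Const → Proc Act Const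

variable {Act Const : Type}

/-- The transition relation of infinitary CCS with success. -/
inductive Step (S : CCS Act Const) : Proc Act Const → Label Act → Proc Act Const → Prop where
  | one : Step S .one .ok .nil
  | preAct (a : Act) (p : Proc Act Const) : Step S (.pre (some a) p) (.act a) p
  | preTau (p : Proc Act Const) : Step S (.pre none p) .tau p
  | sum {f : ℕ → Option (Proc Act Const)} {i : ℕ} {p q : Proc Act Const} {l : Label Act} :
      f i = some p → Step S p l q → Step S (.sum f) l q
  | const {A : Const} {l : Label Act} {q : Proc Act Const} :
      Step S (S.defn A) l q → Step S (.const A) l q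

/-- `p` can report success. -/
def CanOk (S : CCS Act Const) (p : Proc Act Const) : Prop := ∃ q, Step S p .ok q

/-- `p` has no τ-transition. -/
def Stable (S : CCS Act Const) (p : Proc Act Const) : Prop := ¬ ∃ q, Step S p .tau q

/-- τ-transitions of a parallel composition `p ∥ r` (server component first). -/
inductive ParTau (S : CCS Act Const) :
    Proc Act Const × Proc Act Const → Proc Act Const × Proc Act Const → Prop where
  | left {p p' r : Proc Act Const} : Step S p .tau p' → ParTau S (p, r) (p', r)
  | right {p r r' : Proc Act Const} : Step S r .tau r' → ParTau S (p, r) (p, r')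
  | sync {p p' r r' : Proc Act Const} {a : Act} :
      Step S p (.act a) p' → Step S r (.act (S.co a)) r' → ParTau S (p, r) (p', r')

/-- A state of a composition is stuck if it has no τ-transition. -/
def StateStuck (S : CCS Act Const) (st : Proc Act Const × Proc Act Const) : Prop :=
  ¬ ∃ t, ParTau S st t

/-- `ρ` encodes a maximal computation: at each stage either a real τ-step is taken, or the
state is stuck and stutters forever (encoding a finite maximal computation). -/
def MaxComp (S : CCS Act Const) (ρ : ℕ → Proc Act Const × Proc Act Const) : Prop :=
  ∀ k, ParTau S (ρ k) (ρ (k + 1)) ∨ (StateStuck S (ρ k) ∧ ρ (k + 1) = ρ k)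

/-- `p Must r`: every maximal computation of `p ∥ r` is client-successful. -/
def Must (S : CCS Act Const) (p r : Proc Act Const) : Prop :=
  ∀ ρ : ℕ → Proc Act Const × Proc Act Const,
    ρ 0 = (p, r) → MaxComp S ρ → ∃ k, CanOk S (ρ k).2

/-- `p MustSC r`: every maximal computation of `p ∥ r` is successful (both components
eventually can report success). -/
def MustSC (S : CCS Act Const) (p r : Proc Act Const) : Prop :=
  ∀ ρ : ℕ → Proc Act Const × Proc Act Const,
    ρ 0 = (p, r) → MaxComp S ρ → (∃ k, CanOk S (ρ k).2) ∧ (∃ l, CanOk S (ρ l).1)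

/-- The server testing preorder `p ⊑_svr q`. -/
def svrLe (S : CCS Act Const) (p q : Proc Act Const) : Prop :=
  ∀ r, Must S p r → Must S q r

/-- The client testing preorder `r₁ ⊑_clt r₂`. -/
def cltLe (S : CCS Act Const) (r₁ r₂ : Proc Act Const) : Prop :=
  ∀ p, Must S p r₁ → Must S p r₂

/-- The peer testing preorder `p ⊑_p2p q`. -/
def p2pLe (S : CCS Act Const) (p q : Proc Act Const) : Prop :=
  ∀ r, MustSC S p r → MustSC S q r

/-- Weak transition `p ⟹^s q` for finite traces `s ∈ Act*`. -/
inductive Weak (S : CCS Act Const) : Proc Act Const → List Act → Proc Act Const → Prop where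
  | refl (p : Proc Act Const) : Weak S p [] p
  | tau {p p' q : Proc Act Const} {s : List Act} :
      Step S p .tau p' → Weak S p' s q → Weak S p s q
  | act {p p' q : Proc Act Const} {a : Act} {s : List Act} :
      Step S p (.act a) p' → Weak S p' s q → Weak S p (a :: s) q

/-- Unsuccessful weak transition `p ⟹̸✓^s q`: as `Weak` but no state passed through
(including the end points) can report success. -/
inductive UWeak (S : CCS Act Const) : Proc Act Const → List Act → Proc Act Const → Prop where
  | refl {p : Proc Act Const} : ¬ CanOk S p → UWeak S p [] p
  | tau {p p' q : Proc Act Const} {s : List Act} :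
      ¬ CanOk S p → Step S p .tau p' → UWeak S p' s q → UWeak S p s q
  | act {p p' q : Proc Act Const} {a : Act} {s : List Act} :
      ¬ CanOk S p → Step S p (.act a) p' → UWeak S p' s q → UWeak S p (a :: s) q

/-- View `Option Act` (`none` = τ) as a label. -/
def optLabel : Option Act → Label Act
  | some a => .act a
  | none => .tau

/-- The length-`n` prefix of an infinite trace `u ∈ Act^∞`. -/
def prefixList (u : ℕ → Act) (n : ℕ) : List Act := List.ofFn fun i : Fin n => u i.1

/-- Infinite weak transition `p ⟹^u` for `u ∈ Act^∞`. -/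
def InfWeak (S : CCS Act Const) (p : Proc Act Const) (u : ℕ → Act) : Prop :=
  ∃ (ρ : ℕ → Proc Act Const) (ℓ : ℕ → Option Act),
    ρ 0 = p ∧ (∀ k, Step S (ρ k) (optLabel (ℓ k)) (ρ (k + 1))) ∧
    ∀ n, ∃ k, (List.range k).filterMap ℓ = prefixList u n

/-- Infinite unsuccessful weak transition `p ⟹̸✓^u` for `u ∈ Act^∞`. -/
def InfUWeak (S : CCS Act Const) (p : Proc Act Const) (u : ℕ → Act) : Prop :=
  ∃ (ρ : ℕ → Proc Act Const) (ℓ : ℕ → Option Act),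
    ρ 0 = p ∧ (∀ k, Step S (ρ k) (optLabel (ℓ k)) (ρ (k + 1))) ∧
    (∀ k, ¬ CanOk S (ρ k)) ∧
    ∀ n, ∃ k, (List.range k).filterMap ℓ = prefixList u n

/-- `p ⇓`: no infinite sequence of τ-transitions from `p`. -/
def Conv (S : CCS Act Const) (p : Proc Act Const) : Prop :=
  ¬ ∃ ρ : ℕ → Proc Act Const, ρ 0 = p ∧ ∀ k, Step S (ρ k) .tau (ρ (k + 1))

/-- `p after s`. -/
def after (S : CCS Act Const) (p : Proc Act Const) (s : List Act) : Set (Proc Act Const) :=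
  {q | Weak S p s q}

/-- `p afterU s`: residuals after unsuccessful traces. -/
def afterU (S : CCS Act Const) (p : Proc Act Const) (s : List Act) : Set (Proc Act Const) :=
  {q | UWeak S p s q}

-- `⊕X = Σ_{x∈X} τ.x` for a nonempty countable set `X` (junk value otherwise).
open scoped Classical in
noncomputable def bigOplus (X : Set (Proc Act Const)) : Proc Act Const :=
  if h : ∃ f : ℕ → Proc Act Const, Set.range f = X then
    Proc.sum fun n => some (.pre none (h.choose n))
  else Proc.nil

/-- The ready set `S(q)`. -/
def ready (S : CCS Act Const) (q : Proc Act Const) : Set Act :=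
  {a | ∃ q', Step S q (.act a) q'}

/-- The acceptance set `A(p, s)`. -/
def acc (S : CCS Act Const) (p : Proc Act Const) (s : List Act) : Set (Set Act) :=
  {A | ∃ q, Weak S p s q ∧ Stable S q ∧ A = ready S q}

/-- The unsuccessful acceptance set `A✗(p, s)`. -/
def accU (S : CCS Act Const) (p : Proc Act Const) (s : List Act) : Set (Set Act) :=
  {A | ∃ q, UWeak S p s q ∧ Stable S q ∧ A = ready S q}

/-- The usable clients. -/
def Uclt (S : CCS Act Const) : Set (Proc Act Const) := {r | ∃ p, Must S p r}

/-- The usable servers. -/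
def Usvr (S : CCS Act Const) : Set (Proc Act Const) := {p | ∃ r, Must S p r}

/-- Client usability along an unsuccessful trace: `r ⇓U s`. -/
def usbU (S : CCS Act Const) : Proc Act Const → List Act → Prop
  | r, [] => r ∈ Uclt S
  | r, a :: s => r ∈ Uclt S ∧ ((∃ q, UWeak S r [a] q) → usbU S (bigOplus (afterU S r [a])) s)

/-- Client usability along an infinite trace. -/
def usbUInf (S : CCS Act Const) (r : Proc Act Const) (u : ℕ → Act) : Prop :=
  ∀ n, usbU S r (prefixList u n)

/-- Usable actions of a client after `s`: `uaU(r, s)`. -/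
def uaU (S : CCS Act Const) (r : Proc Act Const) (s : List Act) : Set Act :=
  {a | (∃ q, UWeak S r (s ++ [a]) q) → usbU S r (s ++ [a])}

/-- Convergence along a trace: `p ⇓ s`. -/
def convAlong (S : CCS Act Const) : Proc Act Const → List Act → Prop
  | p, [] => Conv S p
  | p, a :: s => Conv S p ∧ ((∃ q, Weak S p [a] q) → convAlong S (bigOplus (after S p [a])) s)

/-- Server usability along a trace: `p ⇓U' s`. -/
def usbS (S : CCS Act Const) : Proc Act Const → List Act → Prop
  | p, [] => p ∈ Usvr S
  | p, a :: s => p ∈ Usvr S ∧ ((∃ q, Weak S p [a] q) → usbS S (bigOplus (after S p [a])) s)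

/-- Server convergence `p ⇓svr s`. -/
def convS (S : CCS Act Const) (p : Proc Act Const) (s : List Act) : Prop :=
  convAlong S p s ∧ usbS S p s

/-- Server convergence along an infinite trace. -/
def convSInf (S : CCS Act Const) (p : Proc Act Const) (u : ℕ → Act) : Prop :=
  ∀ n, convS S p (prefixList u n)

/-- Usable actions of a server after `s`: `uaS(p, s)`. -/
def uaS (S : CCS Act Const) (p : Proc Act Const) (s : List Act) : Set Act :=
  {a | (∃ q, Weak S p s q) → usbS S p (s ++ [a])}

/-- Peer convergence `p ⇓p2p s`. -/
def convP (S : CCS Act Const) (p : Proc Act Const) (s : List Act) : Prop :=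
  convAlong S p s ∧ usbU S p s

/-- Peer convergence along an infinite trace. -/
def convPInf (S : CCS Act Const) (p : Proc Act Const) (u : ℕ → Act) : Prop :=
  ∀ n, convP S p (prefixList u n)

/-- The semantic client preorder `r₁ ≼_clt r₂`. -/
def semClt (S : CCS Act Const) (r₁ r₂ : Proc Act Const) : Prop :=
  (∀ s : List Act, usbU S r₁ s →
    usbU S r₂ s ∧ ∀ B ∈ accU S r₂ s, ∃ A ∈ accU S r₁ s, A ∩ uaU S r₁ s ⊆ B) ∧
  (∀ s : List Act, usbU S r₁ s → (∃ q, UWeak S r₂ s q) → ∃ q, UWeak S r₁ s q) ∧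
  (∀ u : ℕ → Act, usbUInf S r₁ u → InfUWeak S r₂ u → InfUWeak S r₁ u)

/-- The semantic server preorder `p ≼_svr q`. -/
def semSvr (S : CCS Act Const) (p q : Proc Act Const) : Prop :=
  (∀ s : List Act, convS S p s →
    convS S q s ∧ ∀ B ∈ acc S q s, ∃ A ∈ acc S p s, A ∩ uaS S p s ⊆ B) ∧
  (∀ s : List Act, convS S p s → (∃ q', Weak S q s q') → ∃ p', Weak S p s p') ∧
  (∀ u : ℕ → Act, convSInf S p u → InfWeak S q u → InfWeak S p u)

/-- The auxiliary semantic peer relation `p ≼'_p2p q`. -/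
def semP2pAux (S : CCS Act Const) (p q : Proc Act Const) : Prop :=
  (∀ s : List Act, convP S p s →
    convAlong S q s ∧ ∀ B ∈ acc S q s, ∃ A ∈ acc S p s, A ∩ uaU S p s ⊆ B) ∧
  (∀ s : List Act, convP S p s → (∃ q', Weak S q s q') → ∃ p', Weak S p s p') ∧
  (∀ u : ℕ → Act, convPInf S p u → InfWeak S q u → InfWeak S p u)

/-- The semantic peer preorder `p ≼_p2p q`. -/
def semP2p (S : CCS Act Const) (p q : Proc Act Const) : Prop :=
  semClt S p q ∧ semP2pAux S p q

end MTP


namespace MTP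

open Relation

variable {Act Const : Type}

/-! ### Decoding transitions (countability of successors) -/

/-- Decode a list of choices into a transition of `p`. -/
def decode (S : CCS Act Const) : List ℕ → Proc Act Const → Option (Label Act × Proc Act Const)
  | [], .one => some (.ok, .nil)
  | [], .pre o p => some (optLabel o, p)
  | [], .const _ => none
  | [], .sum _ => none
  | i :: t, .sum f => (f i).bind fun p => decode S t p
  | _ :: t, .const A => decode S t (S.defn A)
  | _ :: _, .one => none
  | _ :: _, .pre _ _ => none

lemma step_decode {S : CCS Act Const} {p : Proc Act Const} {l q}
    (h : Step S p l q) : ∃ L, decode S L p = some (l, q) := by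
  induction h with
  | one => exact ⟨[], rfl⟩
  | preAct a p => exact ⟨[], rfl⟩
  | preTau p => exact ⟨[], rfl⟩
  | sum hf _ ih =>
      rename_i f' i pp qq ll hst
      obtain ⟨L, hL⟩ := ih
      exact ⟨i :: L, by simp [decode, hf, hL]⟩
  | const _ ih =>
      obtain ⟨L, hL⟩ := ih
      exact ⟨0 :: L, by simpa [decode] using hL⟩

lemma decode_step {S : CCS Act Const} :
    ∀ (L : List ℕ) (p : Proc Act Const) {l q}, decode S L p = some (l, q) → Step S p l q := by
  intro L
  induction L with
  | nil =>
      intro p l q h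
      cases p with
      | one =>
          simp [decode] at h
          obtain ⟨h1, h2⟩ := h
          subst h1; subst h2; exact .one
      | pre o p' =>
          simp [decode] at h
          obtain ⟨h1, h2⟩ := h
          subst h1; subst h2
          cases o with
          | none => exact .preTau _
          | some a => exact .preAct _ _
      | const A => simp [decode] at h
      | sum f => simp [decode] at h
  | cons i t ih =>
      intro p l q h
      cases p with
      | one => simp [decode] at h
      | pre o p' => simp [decode] at h
      | const A => exact .const (ih _ h)
      | sum f =>
          simp only [decode, Option.bind_eq_some_iff] at h
          obtain ⟨p', hp', h⟩ := h
          exact .sum hp' (ih _ h)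

/-- Decode a list of lists of choices into a multi-step residual of `p`. -/
def decodeN (S : CCS Act Const) : List (List ℕ) → Proc Act Const → Option (Proc Act Const)
  | [], p => some p
  | L :: T, p =>
      match decode S L p with
      | some (_, q) => decodeN S T q
      | none => none

lemma uweak_decodeN {S : CCS Act Const} {r : Proc Act Const} {s x}
    (h : UWeak S r s x) : ∃ T, decodeN S T r = some x := by
  induction h with
  | refl _ => exact ⟨[], rfl⟩
  | tau _ hstep _ ih =>
      obtain ⟨T, hT⟩ := ih
      obtain ⟨L, hL⟩ := step_decode hstep
      exact ⟨L :: T, by simp [decodeN, hL, hT]⟩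
  | act _ hstep _ ih =>
      obtain ⟨T, hT⟩ := ih
      obtain ⟨L, hL⟩ := step_decode hstep
      exact ⟨L :: T, by simp [decodeN, hL, hT]⟩

lemma afterU_exists_range {S : CCS Act Const} {r : Proc Act Const} {s : List Act}
    (hne : (afterU S r s).Nonempty) :
    ∃ f : ℕ → Proc Act Const, Set.range f = afterU S r s := by
  have hc : (afterU S r s).Countable := by
    have hsub : afterU S r s ⊆ (fun q => some q) ⁻¹' Set.range (fun T => decodeN S T r) := by
      intro q hq
      obtain ⟨T, hT⟩ := uweak_decodeN hq
      exact ⟨T, hT⟩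
    exact Set.Countable.mono hsub
      ((Set.countable_range _).preimage (Option.some_injective _))
  obtain ⟨f, hf⟩ := Set.Countable.exists_eq_range hc hne
  exact ⟨f, hf.symm⟩

/-! ### Basic facts about `bigOplus` -/

lemma oplus_tau {S : CCS Act Const} {X : Set (Proc Act Const)}
    (hf : ∃ f : ℕ → Proc Act Const, Set.range f = X) {x} (hx : x ∈ X) :
    Step S (bigOplus X) .tau x := by
  rw [bigOplus, dif_pos hf]
  rw [← hf.choose_spec] at hx
  obtain ⟨n, hn⟩ := hx
  exact .sum (i := n) rfl (hn ▸ .preTau _)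

lemma oplus_inv {S : CCS Act Const} {X : Set (Proc Act Const)}
    (hf : ∃ f : ℕ → Proc Act Const, Set.range f = X) {l q}
    (h : Step S (bigOplus X) l q) : l = .tau ∧ q ∈ X := by
  rw [bigOplus, dif_pos hf] at h
  cases h with
  | sum hfi hstep =>
      injection hfi with h1
      subst h1
      cases hstep with
      | preTau _ =>
          refine ⟨rfl, ?_⟩
          have hmem : hf.choose ‹ℕ› ∈ Set.range hf.choose := Set.mem_range_self _
          rwa [hf.choose_spec] at hmem

lemma oplus_not_canOk {S : CCS Act Const} {X : Set (Proc Act Const)}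
    (hf : ∃ f : ℕ → Proc Act Const, Set.range f = X) :
    ¬ CanOk S (bigOplus X) := by
  rintro ⟨q, hq⟩
  exact nomatch (oplus_inv hf hq).1

/-! ### UWeak / Weak structural lemmas -/

lemma uweak_head {S : CCS Act Const} {r : Proc Act Const} {s x}
    (h : UWeak S r s x) : ¬ CanOk S r := by
  cases h <;> assumption

lemma uweak_last {S : CCS Act Const} {r : Proc Act Const} {s x}
    (h : UWeak S r s x) : ¬ CanOk S x := by
  induction h with
  | refl h => exact h
  | tau _ _ _ ih => exact ih
  | act _ _ _ ih => exact ih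

/-- The relation over product states used to transport `Must`. -/
def PTU (S : CCS Act Const) (st st' : Proc Act Const × Proc Act Const) : Prop :=
  ParTau S st st' ∧ ¬ CanOk S st.2

abbrev StepTau (S : CCS Act Const) (p q : Proc Act Const) : Prop := Step S p .tau q

lemma tauRun_PTU {S : CCS Act Const} {p p' : Proc Act Const}
    (h : ReflTransGen (StepTau S) p p') (r : Proc Act Const) (hr : ¬ CanOk S r) :
    ReflTransGen (PTU S) (p, r) (p', r) := by
  induction h with
  | refl => exact .refl
  | tail _ hbc ih => exact ih.tail ⟨.left hbc, hr⟩

lemma uweak_nil_PTU_aux {S : CCS Act Const} {r : Proc Act Const} {s r₀}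
    (h : UWeak S r s r₀) (hs : s = []) (p : Proc Act Const) :
    ReflTransGen (PTU S) (p, r) (p, r₀) := by
  induction h with
  | refl _ => exact .refl
  | tau hok hstep _ ih => exact .head ⟨.right hstep, hok⟩ (ih hs)
  | act hok hstep h ih => simp at hs

lemma uweak_nil_PTU {S : CCS Act Const} {r r₀ : Proc Act Const}
    (h : UWeak S r [] r₀) (p : Proc Act Const) :
    ReflTransGen (PTU S) (p, r) (p, r₀) :=
  uweak_nil_PTU_aux h rfl p

lemma weak_cons_split_aux {S : CCS Act Const} {p : Proc Act Const} {s q}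
    (h : Weak S p s q) :
    ∀ a s', s = a :: s' →
      ∃ p₀ p₁, ReflTransGen (StepTau S) p p₀ ∧ Step S p₀ (.act a) p₁ ∧ Weak S p₁ s' q := by
  induction h with
  | refl p => intro a s' hs; simp at hs
  | tau hstep _ ih =>
      intro a s' hs
      obtain ⟨p₀, p₁, h1, h2, h3⟩ := ih a s' hs
      exact ⟨p₀, p₁, .head hstep h1, h2, h3⟩
  | act hstep hw ih =>
      intro a s' hs
      cases hs
      exact ⟨_, _, .refl, hstep, hw⟩

lemma uweak_single_split_aux {S : CCS Act Const} {r : Proc Act Const} {s x}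
    (h : UWeak S r s x) :
    ∀ a, s = [a] →
      ∃ r₀ r₁, UWeak S r [] r₀ ∧ Step S r₀ (.act a) r₁ ∧ UWeak S r₁ [] x := by
  induction h with
  | refl _ => intro a hs; simp at hs
  | tau hok hstep _ ih =>
      intro a hs
      obtain ⟨r₀, r₁, h1, h2, h3⟩ := ih a hs
      exact ⟨r₀, r₁, .tau hok hstep h1, h2, h3⟩
  | act hok hstep hw ih =>
      intro a hs
      cases hs
      exact ⟨_, _, .refl hok, hstep, hw⟩

lemma parTau_cases {S : CCS Act Const} {st st' : Proc Act Const × Proc Act Const}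
    (h : ParTau S st st') :
    (Step S st.1 .tau st'.1 ∧ st'.2 = st.2) ∨
    (Step S st.2 .tau st'.2 ∧ st'.1 = st.1) ∨
    (∃ a, Step S st.1 (.act a) st'.1 ∧ Step S st.2 (.act (S.co a)) st'.2) := by
  cases h with
  | left h => exact Or.inl ⟨h, rfl⟩
  | right h => exact Or.inr (Or.inl ⟨h, rfl⟩)
  | sync h1 h2 => exact Or.inr (Or.inr ⟨_, h1, h2⟩)

/-! ### Must transport -/

lemma must_step {S : CCS Act Const} {p r p' r' : Proc Act Const}
    (hM : Must S p r) (h : ParTau S (p, r) (p', r')) (hr : ¬ CanOk S r) :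
    Must S p' r' := by
  intro ρ h0 hmax
  have hM' := hM (fun k => Nat.casesOn k (p, r) ρ) rfl ?_
  · obtain ⟨k, hk⟩ := hM'
    cases k with
    | zero => exact absurd hk hr
    | succ k => exact ⟨k, hk⟩
  · intro k
    cases k with
    | zero => exact Or.inl (by simpa [h0] using h)
    | succ k => exact hmax k

lemma must_chain {S : CCS Act Const} {st st' : Proc Act Const × Proc Act Const}
    (h : ReflTransGen (PTU S) st st') (hM : Must S st.1 st.2) :
    Must S st'.1 st'.2 := by
  induction h with
  | refl => exact hM
  | tail _ hbc ih => exact must_step ih hbc.1 hbc.2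

lemma chain_of_steps {α : Type*} (R : α → α → Prop) (ρ : ℕ → α) :
    ∀ n, (∀ j < n, R (ρ j) (ρ (j + 1))) → ReflTransGen R (ρ 0) (ρ n) := by
  intro n
  induction n with
  | zero => intro _; exact .refl
  | succ n ih =>
      intro h
      exact (ih fun j hj => h j (Nat.lt_succ_of_lt hj)).tail (h n (Nat.lt_succ_self n))

/-- The composed chain `(p, r) ⇒* (p₁, x)` for any unsuccessful residual `x` of `r` after `a`. -/
lemma chainTo {S : CCS Act Const} {p p₀ p₁ r : Proc Act Const} {a : Act}
    (hp0 : ReflTransGen (StepTau S) p p₀) (hstep : Step S p₀ (.act (S.co a)) p₁)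
    {x} (hx : UWeak S r [a] x) :
    ReflTransGen (PTU S) (p, r) (p₁, x) := by
  obtain ⟨r₀, r₁, h1, h2, h3⟩ := uweak_single_split_aux hx a rfl
  have hsync : ParTau S (p₀, r₀) (p₁, r₁) := by
    refine .sync hstep ?_
    rw [S.co_invol]
    exact h2
  exact ((tauRun_PTU hp0 r (uweak_head hx)).trans
    ((uweak_nil_PTU h1 p₀).trans
      (ReflTransGen.head ⟨hsync, uweak_last h1⟩ (uweak_nil_PTU h3 p₁))))

/-! ### The key lemma -/

lemma key {S : CCS Act Const} {p r p₀ p₁ : Proc Act Const} {a : Act}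
    (hM : Must S p r) (hp0 : ReflTransGen (StepTau S) p p₀)
    (hstep : Step S p₀ (.act (S.co a)) p₁)
    (hne : (afterU S r [a]).Nonempty) :
    Must S p₁ (bigOplus (afterU S r [a])) := by
  set X := afterU S r [a] with hX
  have hf : ∃ f : ℕ → Proc Act Const, Set.range f = X := afterU_exists_range hne
  by_cases hmem : bigOplus X ∈ X
  · exact must_chain (chainTo hp0 hstep hmem) hM
  · intro ρ h0 hmax
    by_contra hno
    push_neg at hno
    -- each state with client `⊕X` is not stuck
    have hnotstuck : ∀ k, (ρ k).2 = bigOplus X → ParTau S (ρ k) (ρ (k + 1)) := by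
      intro k hk
      rcases hmax k with h | ⟨hstuck, _⟩
      · exact h
      · exfalso
        obtain ⟨x, hx⟩ := hne
        refine hstuck ⟨((ρ k).1, x), ?_⟩
        have : ρ k = ((ρ k).1, bigOplus X) := Prod.ext rfl hk
        rw [this]
        exact .right (oplus_tau hf hx)
    by_cases hall : ∀ k, (ρ k).2 = bigOplus X
    · -- all steps are server steps: infinite server τ-run
      have hserv : ∀ k, Step S (ρ k).1 .tau (ρ (k + 1)).1 := by
        intro k
        have h := hnotstuck k (hall k)
        rcases parTau_cases h with ⟨h, _⟩ | ⟨h, _⟩ | ⟨a', h1, h2⟩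
        · exact h
        · exfalso
          rw [hall k] at h
          have h2 := oplus_inv hf h
          exact hmem (hall (k + 1) ▸ h2.2)
        · exfalso
          rw [hall k] at h2
          exact nomatch (oplus_inv hf h2).1
      obtain ⟨x, hx⟩ := hne
      have hMx : Must S p₁ x := must_chain (chainTo hp0 hstep hx) hM
      have h0' : ((ρ 0).1, x) = (p₁, x) := by rw [h0]
      obtain ⟨k, hk⟩ := hMx (fun k => ((ρ k).1, x)) h0'
        (fun k => Or.inl (.left (hserv k)))
      exact uweak_last hx hk
    · push_neg at hall
      have hex : ∃ k, (ρ k).2 ≠ bigOplus X := hall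
      classical
      have hk₀ : (ρ (Nat.find hex)).2 ≠ bigOplus X := Nat.find_spec hex
      have hmin : ∀ j < Nat.find hex, (ρ j).2 = bigOplus X := by
        intro j hj
        by_contra hcon
        exact absurd (Nat.find_min hex hj) (by simpa using hcon)
      have hk₀pos : Nat.find hex ≠ 0 := by
        intro hzero
        exact hk₀ (by rw [hzero, h0])
      obtain ⟨m, hm⟩ : ∃ m, Nat.find hex = m + 1 :=
        Nat.exists_eq_succ_of_ne_zero hk₀pos
      rw [hm] at hk₀ hmin
      -- the step at m is a client step to some x ∈ X
      have hstepm := hnotstuck m (hmin m (Nat.lt_succ_self m))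
      have hmain : (ρ (m + 1)).2 ∈ X ∧ (ρ (m + 1)).1 = (ρ m).1 := by
        rcases parTau_cases hstepm with ⟨h, heq⟩ | ⟨h, heq⟩ | ⟨a', h1, h2⟩
        · exact absurd (heq.trans (hmin m (Nat.lt_succ_self m))) hk₀
        · rw [hmin m (Nat.lt_succ_self m)] at h
          exact ⟨(oplus_inv hf h).2, heq⟩
        · exfalso
          rw [hmin m (Nat.lt_succ_self m)] at h2
          exact nomatch (oplus_inv hf h2).1
      have hxX : (ρ (m + 1)).2 ∈ X := hmain.1
      -- server τ-run from p₁ to (ρ m).1 : steps j < m are server steps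
      have hserv : ∀ j < m, Step S (ρ j).1 .tau (ρ (j + 1)).1 := by
        intro j hj
        have h := hnotstuck j (hmin j (Nat.lt_succ_of_lt hj))
        rcases parTau_cases h with ⟨h, _⟩ | ⟨h, _⟩ | ⟨a', h1, h2⟩
        · exact h
        · exfalso
          rw [hmin j (Nat.lt_succ_of_lt hj)] at h
          exact hmem (hmin (j + 1) (Nat.succ_lt_succ hj) ▸ (oplus_inv hf h).2)
        · exfalso
          rw [hmin j (Nat.lt_succ_of_lt hj)] at h2
          exact nomatch (oplus_inv hf h2).1
      have hrun : ReflTransGen (StepTau S) p₁ (ρ m).1 := by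
        have h1 : (ρ 0).1 = p₁ := by rw [h0]
        have := chain_of_steps (StepTau S) (fun j => (ρ j).1) m hserv
        rw [← h1]
        exact this
      have hMx : Must S (ρ m).1 (ρ (m + 1)).2 :=
        must_chain ((chainTo hp0 hstep hxX).trans
          (tauRun_PTU hrun _ (uweak_last hxX))) hM
      have h0' : ρ (m + 1 + 0) = ((ρ m).1, (ρ (m + 1)).2) := by
        rw [Nat.add_zero]
        exact Prod.ext hmain.2 rfl
      obtain ⟨k, hk⟩ := hMx (fun k => ρ (m + 1 + k)) h0'
        (fun k => by
          have := hmax (m + 1 + k)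
          rwa [show m + 1 + k + 1 = m + 1 + (k + 1) by ring] at this)
      exact hno (m + 1 + k) hk

end MTP

/-- Corollary 4.2: if `p Must r` and `p ⟹^s̄ q` then `r ⇓U s`. -/
theorem must_implies_usbU {Act Const : Type} (S : MTP.CCS Act Const)
    (p r q : MTP.Proc Act Const) (s : List Act)
    (hMust : MTP.Must S p r)
    (hWeak : MTP.Weak S p (s.map S.co) q) :
    MTP.usbU S r s := by
  induction s generalizing p r q with
  | nil => exact ⟨p, hMust⟩
  | cons a s ih =>
    refine ⟨⟨p, hMust⟩, fun hex => ?_⟩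
    obtain ⟨p₀, p₁, hp0, hstep, hrest⟩ :=
      MTP.weak_cons_split_aux hWeak (S.co a) (s.map S.co) rfl
    exact ih p₁ (MTP.bigOplus (MTP.afterU S r [a])) q (MTP.key hMust hp0 hstep hex) hrest
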